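/- Let Γ be a simplicial complex with gr_1(Γ) > 2r+1. If uv is an edge of Γ, then a non-returning walk of length r+1 starting with the directed edge uv and a non-returning walk of length r+1 starting with the directed edge vu must have different endpoints. -/

import Mathlib

open Finset

/-- An (abstract) simplicial complex on vertex type `V`: a collection of finite
subsets of `V` (the faces) closed under taking subsets. -/
structure SC (V : Type*) where
  faces : Set (Finset V)
  down_closed : ∀ {F G : Finset V}, F ∈ faces → G ⊆ F → G ∈ faces

namespace SC

variable {V : Type*} [LinearOrder V]

/-- The vertex set of a simplicial complex. -/
def vertexSet (K : SC V) : Set V := {v | {v} ∈ K.faces}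

/-- The induced subcomplex `K[W]` on a set `W` of vertices. -/
def restrict (K : SC V) (W : Set V) : SC V where
  faces := {F | F ∈ K.faces ∧ ↑F ⊆ W}
  down_closed := fun hF hGF =>
    ⟨K.down_closed hF.1 hGF, Set.Subset.trans (Finset.coe_subset.mpr hGF) hF.2⟩

/-- The link `lk_K(F)` of a face `F`: all `G` disjoint from `F` with `F ∪ G ∈ K`. -/
def link (K : SC V) (F : Finset V) : SC V where
  faces := {G | Disjoint F G ∧ F ∪ G ∈ K.faces}
  down_closed := fun hG hHG =>
    ⟨hG.1.mono_right (Finset.le_iff_subset.mpr hHG),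
      K.down_closed hG.2 (Finset.union_subset_union_right hHG)⟩

/-- A complex is flag if every set all of whose subsets of cardinality at most 2
are faces is itself a face (equivalently, all minimal non-faces have two vertices). -/
def Flag (K : SC V) : Prop :=
  ∀ F : Finset V, (∀ G ⊆ F, G.card ≤ 2 → G ∈ K.faces) → F ∈ K.faces

/-- The faces of `K` with exactly `n` vertices (i.e. of dimension `n-1`). -/
def faceSet (K : SC V) (n : ℕ) : Set (Finset V) := {F | F ∈ K.faces ∧ F.card = n}

variable (k : Type*) [Field k]

/-- Simplicial `(n-1)`-chains with coefficients in `k`: formal `k`-linear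
combinations of faces with `n` vertices.  (`n = 0` corresponds to the empty face,
used for *reduced* homology.) -/
abbrev Chains (K : SC V) (n : ℕ) := (faceSet K n) →₀ k

/-- The boundary of a single face, with the usual signs determined by the
linear order on the vertices. -/
noncomputable def bdFace (K : SC V) (n : ℕ) (F : faceSet K (n + 1)) : Chains k K n :=
  ∑ v ∈ (F : Finset V).attach,
    ((-1 : k) ^ (((F : Finset V).filter (fun x => x < (v : V))).card)) •
      Finsupp.single (⟨(F : Finset V).erase v,
        K.down_closed F.2.1 (Finset.erase_subset _ _),
        by rw [Finset.card_erase_of_mem v.2, F.2.2]; rfl⟩ : faceSet K n) 1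

/-- The simplicial boundary map. -/
noncomputable def bd (K : SC V) (n : ℕ) : Chains k K (n + 1) →ₗ[k] Chains k K n :=
  Finsupp.lsum k fun F => LinearMap.toSpanSingleton k _ (bdFace k K n F)

/-- The reduced cycles in degree `n - 1` (chains supported on faces with `n` vertices). -/
noncomputable def cycles (K : SC V) : (n : ℕ) → Submodule k (Chains k K n)
  | 0 => ⊤
  | (m + 1) => LinearMap.ker (bd k K m)

/-- The boundaries in degree `n - 1`. -/
noncomputable def boundaries (K : SC V) (n : ℕ) : Submodule k (Chains k K n) :=
  LinearMap.range (bd k K n)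

/-- `HNonzero k K n` says that the reduced simplicial homology `H̃_{n-1}(K; k)`
is nonzero: some reduced cycle on faces with `n` vertices is not a boundary. -/
def HNonzero (K : SC V) (n : ℕ) : Prop := ¬ (cycles k K n ≤ boundaries k K n)

/-- The dimension of the reduced homology `H̃_{n-1}(K; k)` as a `k`-vector space
(for finite complexes): `dim (cycles) - dim (boundaries ∩ cycles)`. -/
noncomputable def homDim (K : SC V) (n : ℕ) : ℕ :=
  Module.finrank k ↥(cycles k K n) -
    Module.finrank k ↥(boundaries k K n ⊓ cycles k K n)

/-- `girth k K p` is the `(p-1)`-girth `gr_{p-1}(K)` over the field `k`: the least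
cardinality of a vertex set `W` such that `H̃_{p-1}(lk_K(F)[W]; k) ≠ 0` for some
face `F` of `K` (including the empty face), or `∞` if there is no such `W`. -/
noncomputable def girth (K : SC V) (p : ℕ) : ℕ∞ :=
  sInf ((fun W : Finset V => (W.card : ℕ∞)) ''
    {W : Finset V | ∃ F ∈ K.faces, HNonzero k ((K.link F).restrict ↑W) p})

/-- A non-returning walk of length `len` in the directed 1-skeleton of `K`:
consecutive vertices span edges, and no three consecutive vertices return
(`v_i ≠ v_{i+2}`) or span a 2-face of `K`. -/
def IsNRWalk (K : SC V) (len : ℕ) (w : ℕ → V) : Prop :=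
  (∀ i < len, w i ≠ w (i + 1) ∧ ({w i, w (i + 1)} : Finset V) ∈ K.faces) ∧
  (∀ i, i + 2 ≤ len → w i ≠ w (i + 2) ∧ ({w i, w (i + 1), w (i + 2)} : Finset V) ∉ K.faces)

end SC
section Aux

variable {V : Type*} [LinearOrder V] (k : Type*) [Field k]

open Classical in
noncomputable def csingle (K : SC V) (n : ℕ) (F : Finset V) (a : k) : SC.Chains k K n :=
  if h : F ∈ SC.faceSet K n then Finsupp.single ⟨F, h⟩ a else 0

lemma bdFace_pair (K : SC V) {a b : V} (hab : a < b)
    (h : ({a, b} : Finset V) ∈ SC.faceSet K 2) :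
    SC.bdFace k K 1 ⟨{a, b}, h⟩ = csingle k K 1 {b} 1 - csingle k K 1 {a} 1 := by
  have hne : a ≠ b := ne_of_lt hab
  have hba : ¬ (b < a) := asymm hab
  have herase_a : ({a, b} : Finset V).erase a = {b} := by
    rw [Finset.erase_insert (by simp [hne])]
  have herase_b : ({a, b} : Finset V).erase b = {a} := by
    rw [Finset.pair_comm, Finset.erase_insert (by simp [hne.symm])]
  have hfa : ({a, b} : Finset V).filter (fun x => x < a) = ∅ := by
    ext x; simp only [Finset.mem_filter, Finset.mem_insert, Finset.mem_singleton,
      Finset.notMem_empty, iff_false, not_and]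
    rintro (rfl | rfl)
    · exact lt_irrefl _
    · exact hba
  have hfb : ({a, b} : Finset V).filter (fun x => x < b) = {a} := by
    ext x; simp only [Finset.mem_filter, Finset.mem_insert, Finset.mem_singleton]
    constructor
    · rintro ⟨rfl | rfl, hx⟩
      · rfl
      · exact absurd hx (lt_irrefl _)
    · rintro rfl; exact ⟨Or.inl rfl, hab⟩
  have key : ∀ v ∈ ({a, b} : Finset V).attach,
      (((-1 : k) ^ ((({a, b} : Finset V)).filter (fun x => x < (v : V))).card) •
        Finsupp.single (⟨({a, b} : Finset V).erase v,
          K.down_closed h.1 (Finset.erase_subset _ _),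
          by rw [Finset.card_erase_of_mem v.2, h.2]⟩ : SC.faceSet K 1) (1 : k))
      = ((-1 : k) ^ ((({a, b} : Finset V)).filter (fun x => x < (v : V))).card) •
          csingle k K 1 (({a, b} : Finset V).erase (v : V)) 1 := by
    intro v hv
    have hface : ({a, b} : Finset V).erase (v : V) ∈ SC.faceSet K 1 :=
      ⟨K.down_closed h.1 (Finset.erase_subset _ _),
        by rw [Finset.card_erase_of_mem v.2, h.2]⟩
    rw [csingle, dif_pos hface]
  rw [SC.bdFace]
  rw [Finset.sum_congr rfl key]
  rw [Finset.sum_attach ({a, b} : Finset V)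
    (fun u => ((-1 : k) ^ ((({a, b} : Finset V)).filter (fun x => x < u)).card) •
      csingle k K 1 (({a, b} : Finset V).erase u) 1)]
  rw [Finset.sum_pair hne, hfa, hfb, herase_a, herase_b]
  simp [sub_eq_add_neg, add_comm]

end Aux
section Aux2

variable {V : Type*} [LinearOrder V] (k : Type*) [Field k]

lemma bd_csingle_pair (K : SC V) {a b : V} (hab : a < b)
    (h : ({a, b} : Finset V) ∈ SC.faceSet K 2) :
    SC.bd k K 1 (csingle k K 2 {a, b} 1) = csingle k K 1 {b} 1 - csingle k K 1 {a} 1 := by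
  rw [csingle, dif_pos h, SC.bd, Finsupp.lsum_single, LinearMap.toSpanSingleton_apply,
    one_smul, bdFace_pair k K hab h]

/-- The oriented edge chain from `a` to `b`. -/
noncomputable def echain (K : SC V) (a b : V) : SC.Chains k K 2 :=
  if a < b then csingle k K 2 {a, b} 1 else -(csingle k K 2 {a, b} 1)

lemma bd_echain (K : SC V) {a b : V} (hab : a ≠ b)
    (h : ({a, b} : Finset V) ∈ SC.faceSet K 2) :
    SC.bd k K 1 (echain k K a b) = csingle k K 1 {b} 1 - csingle k K 1 {a} 1 := by
  rcases hab.lt_or_gt with hlt | hlt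
  · rw [echain, if_pos hlt, bd_csingle_pair k K hlt h]
  · rw [echain, if_neg (asymm hlt), map_neg, Finset.pair_comm,
      bd_csingle_pair k K hlt (by rwa [Finset.pair_comm a b] at h), neg_sub]

lemma echain_apply_ne (K : SC V) {a b : V} (p : SC.faceSet K 2)
    (hne : (p : Finset V) ≠ {a, b}) : echain k K a b p = 0 := by
  have : ∀ (h : ({a, b} : Finset V) ∈ SC.faceSet K 2),
      Finsupp.single (⟨{a, b}, h⟩ : SC.faceSet K 2) (1 : k) p = 0 := by
    intro h
    exact Finsupp.single_eq_of_ne' (fun he => hne (by rw [← Subtype.ext_iff.mp he]))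
  rw [echain]
  split_ifs with h1
  · rw [csingle]; split_ifs with h2
    · exact this h2
    · rfl
  · rw [csingle]; split_ifs with h2
    · rw [Finsupp.neg_apply, this h2, neg_zero]
    · rw [Finsupp.neg_apply]; norm_num

lemma echain_apply_self (K : SC V) {a b : V}
    (h : ({a, b} : Finset V) ∈ SC.faceSet K 2) (p : SC.faceSet K 2)
    (hp : (p : Finset V) = {a, b}) : echain k K a b p ≠ 0 := by
  have hps : p = (⟨{a, b}, h⟩ : SC.faceSet K 2) := Subtype.ext hp
  rw [echain]
  split_ifs with h1
  · rw [csingle, dif_pos h, hps, Finsupp.single_eq_same]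
    exact one_ne_zero
  · rw [csingle, dif_pos h, Finsupp.neg_apply, hps, Finsupp.single_eq_same]
    simp

end Aux2
section Aux3

variable {V : Type*} [LinearOrder V] (k : Type*) [Field k]

lemma three_indices_face (K : SC V) (L : ℕ) (hL : 3 ≤ L) (x : ℕ → V)
    (hinj : ∀ s, s < L → ∀ t, t < L → x s = x t → s = t)
    (hcorner : ∀ t, t + 3 ≤ L → ({x t, x (t + 1), x (t + 2)} : Finset V) ∉ K.faces)
    (hchordless : ∀ i j, i + 2 ≤ j → j + 2 ≤ i + L → j < L →
      ({x i, x j} : Finset V) ∉ K.faces)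
    (a b c : ℕ) (ha : a < L) (hb : b < L) (hc : c < L)
    (hab : a ≠ b) (hac : a ≠ c) (hbc : b ≠ c)
    (hFK : ({x a, x b, x c} : Finset V) ∈ K.faces) : False := by
  have adj : ∀ s t, s < L → t < L → s < t → ({x s, x t} : Finset V) ∈ K.faces →
      (t = s + 1 ∨ (s = 0 ∧ t + 1 = L)) := by
    intro s t hs ht hst hf
    by_contra hcon
    push_neg at hcon
    have h1 : s + 2 ≤ t := by omega
    have h2 : t + 2 ≤ s + L := by
      by_contra h2
      push_neg at h2
      have : s = 0 ∧ t + 1 = L := by omega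
      exact hcon.2 this.1 this.2
    exact hchordless s t h1 h2 ht hf
  have sorted : ∀ p q r, p < L → q < L → r < L → p < q → q < r →
      ({x p, x q} : Finset V) ∈ K.faces → ({x q, x r} : Finset V) ∈ K.faces →
      ({x p, x r} : Finset V) ∈ K.faces → (p = 0 ∧ q = 1 ∧ r = 2 ∧ L = 3) := by
    intro p q r hp hq hr hpq hqr fpq fqr fpr
    rcases adj p r hp hr (hpq.trans hqr) fpr with h | h
    · omega
    · rcases adj p q hp hq hpq fpq with h' | h'
      · rcases adj q r hq hr hqr fqr with h'' | h''
        · omega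
        · omega
      · omega
  have pf : ∀ s t : V, ({s, t} : Finset V) ⊆ {x a, x b, x c} →
      ({s, t} : Finset V) ∈ K.faces := fun s t hsub => K.down_closed hFK hsub
  have fab : ({x a, x b} : Finset V) ∈ K.faces := pf _ _ (by
    intro y hy; simp only [Finset.mem_insert, Finset.mem_singleton] at hy ⊢; tauto)
  have fac : ({x a, x c} : Finset V) ∈ K.faces := pf _ _ (by
    intro y hy; simp only [Finset.mem_insert, Finset.mem_singleton] at hy ⊢; tauto)
  have fbc : ({x b, x c} : Finset V) ∈ K.faces := pf _ _ (by
    intro y hy; simp only [Finset.mem_insert, Finset.mem_singleton] at hy ⊢; tauto)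
  have fba : ({x b, x a} : Finset V) ∈ K.faces := by rwa [Finset.pair_comm] at fab
  have fca : ({x c, x a} : Finset V) ∈ K.faces := by rwa [Finset.pair_comm] at fac
  have fcb : ({x c, x b} : Finset V) ∈ K.faces := by rwa [Finset.pair_comm] at fbc
  have key : ({x a, x b, x c} : Finset V) = {x 0, x 1, x 2} ∧ L = 3 := by
    rcases lt_trichotomy a b with h1 | h1 | h1
    · rcases lt_trichotomy b c with h2 | h2 | h2
      · obtain ⟨e1, e2, e3, e4⟩ := sorted a b c ha hb hc h1 h2 fab fbc fac
        subst e1; subst e2; subst e3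
        exact ⟨rfl, e4⟩
      · exact absurd h2 hbc
      · rcases lt_trichotomy a c with h3 | h3 | h3
        · obtain ⟨e1, e2, e3, e4⟩ := sorted a c b ha hc hb h3 h2 fac fcb fab
          subst e1; subst e2; subst e3
          refine ⟨by ext y; simp only [Finset.mem_insert, Finset.mem_singleton]; tauto, e4⟩
        · exact absurd h3 hac
        · obtain ⟨e1, e2, e3, e4⟩ := sorted c a b hc ha hb h3 h1 fca fab fcb
          subst e1; subst e2; subst e3
          refine ⟨by ext y; simp only [Finset.mem_insert, Finset.mem_singleton]; tauto, e4⟩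
    · exact absurd h1 hab
    · rcases lt_trichotomy a c with h2 | h2 | h2
      · obtain ⟨e1, e2, e3, e4⟩ := sorted b a c hb ha hc h1 h2 fba fac fbc
        subst e1; subst e2; subst e3
        refine ⟨by ext y; simp only [Finset.mem_insert, Finset.mem_singleton]; tauto, e4⟩
      · exact absurd h2 hac
      · rcases lt_trichotomy b c with h3 | h3 | h3
        · obtain ⟨e1, e2, e3, e4⟩ := sorted b c a hb hc ha h3 h2 fbc fca fba
          subst e1; subst e2; subst e3
          refine ⟨by ext y; simp only [Finset.mem_insert, Finset.mem_singleton]; tauto, e4⟩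
        · exact absurd h3 hbc
        · obtain ⟨e1, e2, e3, e4⟩ := sorted c b a hc hb ha h3 h1 fcb fba fca
          subst e1; subst e2; subst e3
          refine ⟨by ext y; simp only [Finset.mem_insert, Finset.mem_singleton]; tauto, e4⟩
  rw [key.1] at hFK
  exact hcorner 0 (by omega) hFK

lemma chordless_girth (K : SC V) (L : ℕ) (hL : 3 ≤ L) (x : ℕ → V)
    (hclose : x L = x 0)
    (hinj : ∀ s, s < L → ∀ t, t < L → x s = x t → s = t)
    (hedge : ∀ i, i < L → ({x i, x (i + 1)} : Finset V) ∈ K.faces)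
    (hcorner : ∀ t, t + 3 ≤ L → ({x t, x (t + 1), x (t + 2)} : Finset V) ∉ K.faces)
    (hchordless : ∀ i j, i + 2 ≤ j → j + 2 ≤ i + L → j < L →
      ({x i, x j} : Finset V) ∉ K.faces) :
    SC.girth k K 2 ≤ (L : ℕ∞) := by
  classical
  set W : Finset V := (Finset.range L).image x with hW
  set K' : SC V := (K.link ∅).restrict ↑W with hK'
  have mem_K' : ∀ F : Finset V, F ∈ K'.faces ↔ F ∈ K.faces ∧ ↑F ⊆ (↑W : Set V) := by
    intro F
    simp only [hK', SC.restrict, SC.link, Set.mem_setOf_eq, Finset.empty_union,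
      Finset.disjoint_empty_left, true_and]
  have hxW : ∀ i, i ≤ L → x i ∈ W := by
    intro i hi
    rcases lt_or_eq_of_le hi with hi' | hi'
    · exact Finset.mem_image.mpr ⟨i, Finset.mem_range.mpr hi', rfl⟩
    · rw [hi', hclose]
      exact Finset.mem_image.mpr ⟨0, Finset.mem_range.mpr (by omega), rfl⟩
  have hne_step : ∀ i, i < L → x i ≠ x (i + 1) := by
    intro i hi he
    rcases lt_or_eq_of_le (show i + 1 ≤ L from hi) with hi' | hi'
    · have := hinj i hi (i + 1) hi' he
      omega
    · rw [hi', hclose] at he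
      have := hinj i hi 0 (by omega) he
      omega
  have hedge' : ∀ i, i < L → ({x i, x (i + 1)} : Finset V) ∈ SC.faceSet K' 2 := by
    intro i hi
    refine ⟨(mem_K' _).mpr ⟨hedge i hi, ?_⟩, Finset.card_pair (hne_step i hi)⟩
    intro y hy
    simp only [Finset.coe_insert, Set.mem_insert_iff, Finset.coe_singleton,
      Set.mem_singleton_iff] at hy
    rcases hy with rfl | rfl
    · exact hxW i hi.le
    · exact hxW (i + 1) hi
  set σ : SC.Chains k K' 2 := ∑ i ∈ Finset.range L, echain k K' (x i) (x (i + 1)) with hσ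
  have hbdσ : SC.bd k K' 1 σ = 0 := by
    rw [hσ, map_sum]
    rw [Finset.sum_congr rfl (fun i hi => bd_echain k K'
      (hne_step i (Finset.mem_range.mp hi)) (hedge' i (Finset.mem_range.mp hi)))]
    rw [Finset.sum_range_sub (fun i => csingle k K' 1 {x i} 1), hclose, sub_self]
  have hσcyc : σ ∈ SC.cycles k K' 2 := by
    show σ ∈ LinearMap.ker (SC.bd k K' 1)
    exact LinearMap.mem_ker.mpr hbdσ
  have hσne : σ ≠ 0 := by
    intro h0
    have hp0 : ({x 0, x 1} : Finset V) ∈ SC.faceSet K' 2 := hedge' 0 (by omega)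
    have happ : σ (⟨{x 0, x 1}, hp0⟩ : SC.faceSet K' 2) = 0 := by rw [h0]; rfl
    rw [hσ, Finsupp.finset_sum_apply] at happ
    rw [Finset.sum_eq_single_of_mem 0 (Finset.mem_range.mpr (by omega))] at happ
    · exact echain_apply_self k K' hp0 _ rfl happ
    · intro i hi hine
      have hiL : i < L := Finset.mem_range.mp hi
      refine echain_apply_ne k K' _ ?_
      intro he
      have hxi : x i ∈ ({x i, x (i + 1)} : Finset V) := Finset.mem_insert_self _ _
      rw [← he] at hxi
      simp only [Finset.mem_insert, Finset.mem_singleton] at hxi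
      rcases hxi with hxi | hxi
      · exact hine (hinj i hiL 0 (by omega) hxi)
      · have hi1 : i = 1 := hinj i hiL 1 (by omega) hxi
        subst hi1
        have hx2 : x 2 ∈ ({x 1, x 2} : Finset V) := by simp
        rw [← he] at hx2
        simp only [Finset.mem_insert, Finset.mem_singleton] at hx2
        rcases hx2 with hx2 | hx2
        · have := hinj 2 (by omega) 0 (by omega) hx2
          omega
        · have := hinj 2 (by omega) 1 (by omega) hx2
          omega
  have hface3 : ∀ F : Finset V, F ∉ SC.faceSet K' 3 := by
    rintro F ⟨hF', hcard⟩
    obtain ⟨hFK, hFW⟩ := (mem_K' F).mp hF'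
    obtain ⟨u1, u2, u3, h12, h13, h23, rfl⟩ := Finset.card_eq_three.mp hcard
    have hm1 : u1 ∈ W := by
      have : u1 ∈ (↑({u1, u2, u3} : Finset V) : Set V) := by simp
      exact_mod_cast hFW this
    have hm2 : u2 ∈ W := by
      have : u2 ∈ (↑({u1, u2, u3} : Finset V) : Set V) := by simp
      exact_mod_cast hFW this
    have hm3 : u3 ∈ W := by
      have : u3 ∈ (↑({u1, u2, u3} : Finset V) : Set V) := by simp
      exact_mod_cast hFW this
    obtain ⟨a, ha, hxa⟩ := Finset.mem_image.mp hm1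
    obtain ⟨b, hb, hxb⟩ := Finset.mem_image.mp hm2
    obtain ⟨c, hc, hxc⟩ := Finset.mem_image.mp hm3
    rw [Finset.mem_range] at ha hb hc
    subst hxa; subst hxb; subst hxc
    refine three_indices_face K L hL x hinj hcorner hchordless a b c ha hb hc
      (fun h => h12 (by rw [h])) (fun h => h13 (by rw [h])) (fun h => h23 (by rw [h])) hFK
  have hbnd : ∀ y ∈ SC.boundaries k K' 2, y = 0 := by
    rintro y ⟨β, rfl⟩
    have hβ : β = 0 := by
      ext p
      exact absurd p.2 (hface3 p.1)
    rw [hβ, map_zero]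
  have hH : SC.HNonzero k K' 2 := fun hle => hσne (hbnd σ (hle hσcyc))
  have hempty : (∅ : Finset V) ∈ K.faces :=
    K.down_closed (hedge 0 (by omega)) (Finset.empty_subset _)
  have hmem : (W.card : ℕ∞) ∈ ((fun W : Finset V => (W.card : ℕ∞)) ''
      {W : Finset V | ∃ F ∈ K.faces, SC.HNonzero k ((K.link F).restrict ↑W) 2}) :=
    ⟨W, ⟨∅, hempty, hH⟩, rfl⟩
  have h1 : SC.girth k K 2 ≤ (W.card : ℕ∞) := sInf_le hmem
  have h2 : W.card ≤ L := le_trans Finset.card_image_le (by rw [Finset.card_range])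
  exact le_trans h1 (by exact_mod_cast h2)

end Aux3
section Aux4

variable {V : Type*} [LinearOrder V] (k : Type*) [Field k]

/-- Any closed walk with distinct vertices, whose corners (except the two containing
the wrap-around edge) span non-faces, forces the girth to be at most its length. -/
lemma loop_inj_girth (K : SC V) : ∀ L : ℕ, 3 ≤ L → ∀ x : ℕ → V, x L = x 0 →
    (∀ s, s < L → ∀ t, t < L → x s = x t → s = t) →
    (∀ i, i < L → ({x i, x (i + 1)} : Finset V) ∈ K.faces) →
    (∀ t, t + 3 ≤ L → ({x t, x (t + 1), x (t + 2)} : Finset V) ∉ K.faces) →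
    SC.girth k K 2 ≤ (L : ℕ∞) := by
  intro L
  induction L using Nat.strong_induction_on with
  | _ L IH =>
    intro hL x hclose hinj hedge hcorner
    by_cases hch : ∃ i j, i + 2 ≤ j ∧ j + 2 ≤ i + L ∧ j < L ∧
        ({x i, x j} : Finset V) ∈ K.faces
    · obtain ⟨i, j, hij2, hjiL, hjL, hchord⟩ := hch
      set m : ℕ := j - i + 1 with hm
      have hm3 : 3 ≤ m := by omega
      have hmL : m < L := by omega
      set y : ℕ → V := fun t => if t < m then x (i + t) else x i with hy
      have hy_lt : ∀ t, t < m → y t = x (i + t) := by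
        intro t ht; rw [hy]; simp only [if_pos ht]
      have hy_end : y m = x i := by rw [hy]; simp
      have hiL : i < L := by omega
      have hidx : ∀ t, t < m → i + t < L := by omega
      refine le_trans (IH m hmL hm3 y ?_ ?_ ?_ ?_) (by exact_mod_cast hmL.le)
      · rw [hy_end, hy_lt 0 (by omega)]; norm_num
      · intro s hs t ht he
        rw [hy_lt s hs, hy_lt t ht] at he
        have := hinj (i + s) (hidx s hs) (i + t) (hidx t ht) he
        omega
      · intro t ht
        rcases lt_or_eq_of_le (show t + 1 ≤ m from ht) with ht' | ht'
        · rw [hy_lt t ht, hy_lt (t + 1) ht']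
          exact hedge (i + t) (by omega)
        · rw [hy_lt t ht, ht', hy_end]
          have hit : i + t = j := by omega
          rw [hit, Finset.pair_comm]
          exact hchord
      · intro t ht
        rw [hy_lt t (by omega), hy_lt (t + 1) (by omega), hy_lt (t + 2) (by omega)]
        have : i + t + 3 ≤ L := by omega
        have hc := hcorner (i + t) this
        have e1 : i + t + 1 = i + (t + 1) := by omega
        have e2 : i + t + 2 = i + (t + 2) := by omega
        rwa [e1, e2] at hc
    · push_neg at hch
      exact chordless_girth k K L hL x hclose hinj hedge hcorner
        (fun i j h1 h2 h3 => hch i j h1 h2 h3)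

/-- A closed walk (possibly with repeated vertices) all of whose corners, except the
two containing the wrap-around edge, are non-returning, forces girth ≤ length. -/
lemma loop_girth (K : SC V) : ∀ L : ℕ, 3 ≤ L → ∀ c : ℕ → V, c L = c 0 →
    (∀ i, i < L → c i ≠ c (i + 1) ∧ ({c i, c (i + 1)} : Finset V) ∈ K.faces) →
    (∀ t, t + 3 ≤ L → c t ≠ c (t + 2) ∧ ({c t, c (t + 1), c (t + 2)} : Finset V) ∉ K.faces) →
    SC.girth k K 2 ≤ (L : ℕ∞) := by
  intro L
  induction L using Nat.strong_induction_on with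
  | _ L IH =>
    intro hL c hclose hedge hcorner
    by_cases hrep : ∃ s t, s < t ∧ t < L ∧ c s = c t
    · obtain ⟨s, t, hst, htL, hrep⟩ := hrep
      set m : ℕ := t - s with hm
      have hm1 : m ≠ 1 := by
        intro h
        have : t = s + 1 := by omega
        exact (hedge s (by omega)).1 (by rw [← this]; exact hrep)
      have hm2 : m ≠ 2 := by
        intro h
        have ht2 : t = s + 2 := by omega
        exact (hcorner s (by omega)).1 (by rw [← ht2]; exact hrep)
      have hm3 : 3 ≤ m := by omega
      have hmL : m < L := by omega
      set d : ℕ → V := fun i => c (s + i) with hd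
      refine le_trans (IH m hmL hm3 d ?_ ?_ ?_) (by exact_mod_cast hmL.le)
      · show c (s + m) = c (s + 0)
        have : s + m = t := by omega
        rw [this, ← hrep]
        norm_num
      · intro i hi
        have e1 : s + i + 1 = s + (i + 1) := by omega
        have := hedge (s + i) (by omega)
        rwa [e1] at this
      · intro i hi
        have e1 : s + i + 1 = s + (i + 1) := by omega
        have e2 : s + i + 2 = s + (i + 2) := by omega
        have := hcorner (s + i) (by omega)
        rwa [e1, e2] at this
    · push_neg at hrep
      refine loop_inj_girth k K L hL c hclose ?_ (fun i hi => (hedge i hi).2)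
        (fun t ht => (hcorner t ht).2)
      intro a ha b hb he
      by_contra hne
      rcases Nat.lt_or_ge a b with h | h
      · exact hrep a b h hb he
      · exact hrep b a (by omega) ha he.symm

end Aux4
/-- If `gr_1(K) > 2r+1` and `uv` is an edge of `K`, then a
non-returning walk of length `r+1` starting with the directed edge `uv` and one of
length `r+1` starting with `vu` have different endpoints. -/
theorem nrwalk_endpoints_ne {V : Type*} [LinearOrder V] (k : Type*) [Field k]
    (K : SC V) (r : ℕ) (hg : ((2 * r + 1 : ℕ) : ℕ∞) < SC.girth k K 2)
    (u v : V) (hne : u ≠ v) (huv : ({u, v} : Finset V) ∈ K.faces)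
    (w1 w2 : ℕ → V) (h1 : SC.IsNRWalk K (r + 1) w1) (h2 : SC.IsNRWalk K (r + 1) w2)
    (h10 : w1 0 = u) (h11 : w1 1 = v) (h20 : w2 0 = v) (h21 : w2 1 = u) :
    w1 (r + 1) ≠ w2 (r + 1) := by
  rcases Nat.eq_zero_or_pos r with hr0 | hr
  · subst hr0
    have key : w1 1 ≠ w2 1 := by rw [h11, h21]; exact fun h => hne h.symm
    simpa using key
  intro hmeet
  set L : ℕ := 2 * r + 1 with hLdef
  set c : ℕ → V := fun i => if i < r then w2 (r - i) else if i ≤ 2 * r then w1 (i - r + 1)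
    else w2 r with hc
  have hc_lo : ∀ i, i < r → c i = w2 (r - i) := by
    intro i hi; rw [hc]; simp only [if_pos hi]
  have hc_mid : ∀ i, r ≤ i → i ≤ 2 * r → c i = w1 (i - r + 1) := by
    intro i hi1 hi2; rw [hc]
    simp only [if_neg (by omega : ¬ i < r), if_pos hi2]
  have hc_hi : c (2 * r + 1) = w2 r := by
    rw [hc]
    simp only [if_neg (by omega : ¬ 2 * r + 1 < r), if_neg (by omega : ¬ 2 * r + 1 ≤ 2 * r)]
  have hclose : c L = c 0 := by
    rw [hLdef, hc_hi, hc_lo 0 hr, Nat.sub_zero]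
  have triple_rev : ∀ a b d : V, ({a, b, d} : Finset V) = {d, b, a} := by
    intro a b d; ext y
    simp only [Finset.mem_insert, Finset.mem_singleton]
    tauto
  have hedge : ∀ i, i < L → c i ≠ c (i + 1) ∧ ({c i, c (i + 1)} : Finset V) ∈ K.faces := by
    intro i hiL
    rcases Nat.lt_or_ge (i + 1) r with hcase | hcase
    · -- both in the reversed w2 segment
      rw [hc_lo i (by omega), hc_lo (i + 1) hcase]
      obtain ⟨j, hj⟩ : ∃ j, r - i = j + 1 := ⟨r - i - 1, by omega⟩
      have hj' : r - (i + 1) = j := by omega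
      rw [hj, hj']
      obtain ⟨hd, hf⟩ := h2.1 j (by omega)
      exact ⟨hd.symm, by rwa [Finset.pair_comm] at hf⟩
    · rcases Nat.lt_or_ge i r with hcase2 | hcase2
      · -- i = r - 1 : the edge {u, v}
        have hir : i + 1 = r := by omega
        rw [hc_lo i hcase2, hc_mid (i + 1) (by omega) (by omega)]
        have e1 : r - i = 1 := by omega
        have e2 : i + 1 - r + 1 = 1 := by omega
        rw [e1, e2, h21, h11]
        exact ⟨hne, huv⟩
      · rcases Nat.lt_or_ge i (2 * r) with hcase3 | hcase3
        · -- both in the w1 segment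
          rw [hc_mid i hcase2 (by omega), hc_mid (i + 1) (by omega) (by omega)]
          have e1 : i + 1 - r + 1 = (i - r + 1) + 1 := by omega
          rw [e1]
          exact h1.1 (i - r + 1) (by omega)
        · -- i = 2r : the junction edge at the meeting point
          have hi2r : i = 2 * r := by omega
          subst hi2r
          rw [hc_mid (2 * r) (by omega) le_rfl, hc_hi]
          have e1 : 2 * r - r + 1 = r + 1 := by omega
          rw [e1, hmeet]
          obtain ⟨hd, hf⟩ := h2.1 r (by omega)
          exact ⟨hd.symm, by rwa [Finset.pair_comm] at hf⟩
  have hcorner : ∀ t, t + 3 ≤ L → c t ≠ c (t + 2) ∧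
      ({c t, c (t + 1), c (t + 2)} : Finset V) ∉ K.faces := by
    intro t htL
    rcases Nat.lt_or_ge (t + 2) r with hcase | hcase
    · -- all three in the reversed w2 segment
      rw [hc_lo t (by omega), hc_lo (t + 1) (by omega), hc_lo (t + 2) hcase]
      obtain ⟨j, hj⟩ : ∃ j, r - (t + 2) = j := ⟨r - (t + 2), rfl⟩
      have e1 : r - (t + 1) = j + 1 := by omega
      have e2 : r - t = j + 2 := by omega
      rw [hj, e1, e2]
      obtain ⟨hd, hf⟩ := h2.2 j (by omega)
      exact ⟨hd.symm, by rw [triple_rev]; exact hf⟩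
    · rcases Nat.lt_or_ge (t + 1) r with hcase2 | hcase2
      · -- t+2 = r : corner (w2 2, w2 1 = u, v)
        have htr : t + 2 = r := by omega
        rw [hc_lo t (by omega), hc_lo (t + 1) hcase2, hc_mid (t + 2) (by omega) (by omega)]
        have e1 : r - t = 2 := by omega
        have e2 : r - (t + 1) = 1 := by omega
        have e3 : t + 2 - r + 1 = 1 := by omega
        rw [e1, e2, e3, h11]
        obtain ⟨hd, hf⟩ := h2.2 0 (by omega)
        norm_num at hd hf
        rw [h20] at hd hf
        exact ⟨fun hh => hd hh.symm, fun hh => hf (by rwa [triple_rev] at hh)⟩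
      · rcases Nat.lt_or_ge t r with hcase3 | hcase3
        · -- t+1 = r : corner (u, v, w1 2)
          have htr : t + 1 = r := by omega
          rw [hc_lo t hcase3, hc_mid (t + 1) (by omega) (by omega),
            hc_mid (t + 2) (by omega) (by omega)]
          have e1 : r - t = 1 := by omega
          have e2 : t + 1 - r + 1 = 1 := by omega
          have e3 : t + 2 - r + 1 = 2 := by omega
          rw [e1, e2, e3, h21, h11]
          obtain ⟨hd, hf⟩ := h1.2 0 (by omega)
          norm_num at hd hf
          rw [h10] at hd hf
          rw [h11] at hf
          exact ⟨hd, hf⟩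
        · -- all three in the w1 segment
          rw [hc_mid t hcase3 (by omega), hc_mid (t + 1) (by omega) (by omega),
            hc_mid (t + 2) (by omega) (by omega)]
          have e1 : t + 1 - r + 1 = (t - r + 1) + 1 := by omega
          have e2 : t + 2 - r + 1 = (t - r + 1) + 2 := by omega
          rw [e1, e2]
          exact h1.2 (t - r + 1) (by omega)
  have hgle : SC.girth k K 2 ≤ (L : ℕ∞) :=
    loop_girth k K L (by omega) c hclose hedge hcorner
  rw [hLdef] at hgle
  exact absurd hgle (not_le.mpr hg)
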